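/- Let f_n(x) = β_n/x + μ t_n x, with all β_n, t_n, μ > 0. Suppose the minimizer of ∑_{n=s}^{t} f_n(F_n) over F_s ≥ ... ≥ F_t > 0 is the constant vector with value V1 = sqrt((∑_{n=s}^{t} β_n)/(μ ∑_{n=s}^{t} t_n)), and the minimizer of ∑_{n=t+1}^{l} f_n(F_n) over F_{t+1} ≥ ... ≥ F_l > 0 is the constant vector with value V2 = sqrt((∑_{n=t+1}^{l} β_n)/(μ ∑_{n=t+1}^{l} t_n)). If V1 ≤ V2, then V̄ = sqrt((∑_{n=s}^{l} β_n)/(μ ∑_{n=s}^{l} t_n)) satisfies V1 ≤ V̄ ≤ V2, and the constant vector with value V̄ minimizes ∑_{n=s}^{l} f_n(F_n) over F_s ≥ ... ≥ F_l > 0. -/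

import Mathlib

set_option maxHeartbeats 1000000

lemma chain_mono (F : ℕ → ℝ) (s l : ℕ)
    (hmono : ∀ n, s ≤ n → n < l → F (n + 1) ≤ F n) :
    ∀ m n, s ≤ m → m ≤ n → n ≤ l → F n ≤ F m := by
  intro m n hsm hmn hnl
  induction n, hmn using Nat.le_induction with
  | base => exact le_refl _
  | succ n hmn ih =>
    exact le_trans (hmono n (le_trans hsm hmn) (by omega)) (ih (by omega))

lemma abel_nonneg (c : ℕ → ℝ) (s : ℕ) : ∀ l, s ≤ l →
    (∀ j, s ≤ j → j ≤ l → 0 ≤ ∑ n ∈ Finset.Icc s j, c n) →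
    ∀ F : ℕ → ℝ, (∀ n, s ≤ n → n < l → F (n + 1) ≤ F n) →
    (∀ n, s ≤ n → n ≤ l → 0 ≤ F n) →
    0 ≤ ∑ n ∈ Finset.Icc s l, c n * F n := by
  intro l hsl
  induction l, hsl using Nat.le_induction with
  | base =>
    intro hP F _ hpos
    rw [Finset.Icc_self, Finset.sum_singleton]
    have := hP s le_rfl le_rfl
    rw [Finset.Icc_self, Finset.sum_singleton] at this
    exact mul_nonneg this (hpos s le_rfl le_rfl)
  | succ l hsl ih =>
    intro hP F hmono hpos
    have key : ∑ n ∈ Finset.Icc s (l + 1), c n * F n =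
        (∑ n ∈ Finset.Icc s l, c n * (F n - F (l + 1))) +
        (∑ n ∈ Finset.Icc s (l + 1), c n) * F (l + 1) := by
      rw [Finset.sum_Icc_succ_top (by omega : s ≤ l + 1),
          Finset.sum_Icc_succ_top (by omega : s ≤ l + 1)]
      rw [add_mul, Finset.sum_mul]
      have expand : ∑ n ∈ Finset.Icc s l, c n * (F n - F (l + 1)) +
          ∑ n ∈ Finset.Icc s l, c n * F (l + 1) = ∑ n ∈ Finset.Icc s l, c n * F n := by
        rw [← Finset.sum_add_distrib]
        exact Finset.sum_congr rfl fun n _ => by ring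
      linarith
    rw [key]
    have h1 : 0 ≤ ∑ n ∈ Finset.Icc s l, c n * (F n - F (l + 1)) := by
      apply ih (fun j hj hjl => hP j hj (by omega)) (fun n => F n - F (l + 1))
      · intro n hn hnl; have := hmono n hn (by omega); linarith
      · intro n hsn hnl
        have := chain_mono F s (l + 1) hmono n (l + 1) hsn (by omega) le_rfl
        linarith
    have h2 : 0 ≤ (∑ n ∈ Finset.Icc s (l + 1), c n) * F (l + 1) :=
      mul_nonneg (hP (l + 1) (by omega) le_rfl) (hpos (l + 1) (by omega) le_rfl)
    linarith

theorem block_merge_optimal (β t : ℕ → ℝ) (μ : ℝ)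
    (hβpos : ∀ n, 0 < β n) (htpos : ∀ n, 0 < t n) (hμ : 0 < μ)
    (s k l : ℕ) (hsk : s ≤ k) (hkl : k < l)
    (V1 V2 Vbar : ℝ)
    (hV1 : V1 = Real.sqrt ((∑ n ∈ Finset.Icc s k, β n) / (μ * ∑ n ∈ Finset.Icc s k, t n)))
    (hV2 : V2 = Real.sqrt ((∑ n ∈ Finset.Icc (k + 1) l, β n) /
      (μ * ∑ n ∈ Finset.Icc (k + 1) l, t n)))
    (hVbar : Vbar = Real.sqrt ((∑ n ∈ Finset.Icc s l, β n) /
      (μ * ∑ n ∈ Finset.Icc s l, t n)))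
    (hmin1 : ∀ F : ℕ → ℝ, (∀ n ∈ Finset.Icc s k, 0 < F n) →
      (∀ n, s ≤ n → n < k → F (n + 1) ≤ F n) →
      ∑ n ∈ Finset.Icc s k, (β n / V1 + μ * t n * V1) ≤
        ∑ n ∈ Finset.Icc s k, (β n / F n + μ * t n * F n))
    (hmin2 : ∀ F : ℕ → ℝ, (∀ n ∈ Finset.Icc (k + 1) l, 0 < F n) →
      (∀ n, k + 1 ≤ n → n < l → F (n + 1) ≤ F n) →
      ∑ n ∈ Finset.Icc (k + 1) l, (β n / V2 + μ * t n * V2) ≤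
        ∑ n ∈ Finset.Icc (k + 1) l, (β n / F n + μ * t n * F n))
    (hV12 : V1 ≤ V2) :
    (V1 ≤ Vbar ∧ Vbar ≤ V2) ∧
      ∀ F : ℕ → ℝ, (∀ n ∈ Finset.Icc s l, 0 < F n) →
        (∀ n, s ≤ n → n < l → F (n + 1) ≤ F n) →
        ∑ n ∈ Finset.Icc s l, (β n / Vbar + μ * t n * Vbar) ≤
          ∑ n ∈ Finset.Icc s l, (β n / F n + μ * t n * F n) := by
  have hskl : s ≤ l := by omega
  have hne1 : (Finset.Icc s k).Nonempty := Finset.nonempty_Icc.mpr hsk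
  have hne2 : (Finset.Icc (k + 1) l).Nonempty := Finset.nonempty_Icc.mpr (by omega)
  have hne : (Finset.Icc s l).Nonempty := Finset.nonempty_Icc.mpr hskl
  set B1 := ∑ n ∈ Finset.Icc s k, β n with hB1def
  set T1 := ∑ n ∈ Finset.Icc s k, t n with hT1def
  set B2 := ∑ n ∈ Finset.Icc (k + 1) l, β n with hB2def
  set T2 := ∑ n ∈ Finset.Icc (k + 1) l, t n with hT2def
  set B := ∑ n ∈ Finset.Icc s l, β n with hBdef
  set T := ∑ n ∈ Finset.Icc s l, t n with hTdef
  have hB1 : 0 < B1 := Finset.sum_pos (fun n _ => hβpos n) hne1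
  have hT1 : 0 < T1 := Finset.sum_pos (fun n _ => htpos n) hne1
  have hB2 : 0 < B2 := Finset.sum_pos (fun n _ => hβpos n) hne2
  have hT2 : 0 < T2 := Finset.sum_pos (fun n _ => htpos n) hne2
  have hB : 0 < B := Finset.sum_pos (fun n _ => hβpos n) hne
  have hT : 0 < T := Finset.sum_pos (fun n _ => htpos n) hne
  have hdisj : Disjoint (Finset.Icc s k) (Finset.Icc (k + 1) l) := by
    rw [Finset.disjoint_left]
    intro a ha hb
    simp only [Finset.mem_Icc] at ha hb
    omega
  have hunion : Finset.Icc s k ∪ Finset.Icc (k + 1) l = Finset.Icc s l := by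
    ext n; simp only [Finset.mem_union, Finset.mem_Icc]; omega
  have hBsum : B = B1 + B2 := by
    rw [hBdef, hB1def, hB2def, ← hunion, Finset.sum_union hdisj]
  have hTsum : T = T1 + T2 := by
    rw [hTdef, hT1def, hT2def, ← hunion, Finset.sum_union hdisj]
  have hV1pos : 0 < V1 := by
    rw [hV1]; exact Real.sqrt_pos.mpr (div_pos hB1 (mul_pos hμ hT1))
  have hV2pos : 0 < V2 := by
    rw [hV2]; exact Real.sqrt_pos.mpr (div_pos hB2 (mul_pos hμ hT2))
  have hVbpos : 0 < Vbar := by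
    rw [hVbar]; exact Real.sqrt_pos.mpr (div_pos hB (mul_pos hμ hT))
  have hV1sq : V1 ^ 2 = B1 / (μ * T1) := by rw [hV1, Real.sq_sqrt (by positivity)]
  have hV2sq : V2 ^ 2 = B2 / (μ * T2) := by rw [hV2, Real.sq_sqrt (by positivity)]
  have hVbsq : Vbar ^ 2 = B / (μ * T) := by rw [hVbar, Real.sq_sqrt (by positivity)]
  -- Part 1
  have h12sq : B1 / (μ * T1) ≤ B2 / (μ * T2) := by
    rw [← hV1sq, ← hV2sq]; exact pow_le_pow_left₀ hV1pos.le hV12 2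
  have hcross : B1 * T2 ≤ B2 * T1 := by
    rw [div_le_div_iff₀ (by positivity) (by positivity)] at h12sq
    nlinarith
  have hle1 : V1 ≤ Vbar := by
    rw [hV1, hVbar]
    apply Real.sqrt_le_sqrt
    rw [div_le_div_iff₀ (by positivity) (by positivity), hBsum, hTsum]
    nlinarith
  have hle2 : Vbar ≤ V2 := by
    rw [hV2, hVbar]
    apply Real.sqrt_le_sqrt
    rw [div_le_div_iff₀ (by positivity) (by positivity), hBsum, hTsum]
    nlinarith
  refine ⟨⟨hle1, hle2⟩, ?_⟩
  -- prefix conditions from hmin1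
  have hprefix : ∀ j, s ≤ j → j ≤ k →
      (∑ n ∈ Finset.Icc s j, β n) ≤ V1 ^ 2 * ∑ n ∈ Finset.Icc s j, (μ * t n) := by
    intro j hsj hjk
    have hnej : (Finset.Icc s j).Nonempty := Finset.nonempty_Icc.mpr hsj
    have hSj : 0 < ∑ n ∈ Finset.Icc s j, (μ * t n) :=
      Finset.sum_pos (fun n _ => by have := htpos n; positivity) hnej
    have hBj : 0 < ∑ n ∈ Finset.Icc s j, β n := Finset.sum_pos (fun n _ => hβpos n) hnej
    have key : ∀ ε : ℝ, 0 < ε →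
        (∑ n ∈ Finset.Icc s j, β n) ≤
          V1 * (V1 + ε) * ∑ n ∈ Finset.Icc s j, (μ * t n) := by
      intro ε hε
      have hVε : 0 < V1 + ε := by linarith
      have hFpos : ∀ n ∈ Finset.Icc s k, 0 < (if n ≤ j then V1 + ε else V1) := by
        intro n _; split_ifs <;> linarith
      have hFmono : ∀ n, s ≤ n → n < k →
          (if n + 1 ≤ j then V1 + ε else V1) ≤ (if n ≤ j then V1 + ε else V1) := by
        intro n _ _
        split_ifs <;> first | exact le_rfl | linarith | omega
      have h := hmin1 (fun n => if n ≤ j then V1 + ε else V1) hFpos hFmono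
      have h0 : 0 ≤ ∑ n ∈ Finset.Icc s k,
          ((β n / (if n ≤ j then V1 + ε else V1) + μ * t n * (if n ≤ j then V1 + ε else V1))
            - (β n / V1 + μ * t n * V1)) := by
        rw [Finset.sum_sub_distrib]; linarith
      have hdiff : ∀ n ∈ Finset.Icc s k,
          ((β n / (if n ≤ j then V1 + ε else V1) + μ * t n * (if n ≤ j then V1 + ε else V1))
            - (β n / V1 + μ * t n * V1)) =
          if n ≤ j then ε * (μ * t n - β n / (V1 * (V1 + ε))) else 0 := by
        intro n _
        by_cases h' : n ≤ j
        · simp only [h', if_true]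
          field_simp
          ring
        · simp [h']
      rw [Finset.sum_congr rfl hdiff, ← Finset.sum_filter] at h0
      have hfil : (Finset.Icc s k).filter (fun n => n ≤ j) = Finset.Icc s j := by
        ext n; simp only [Finset.mem_filter, Finset.mem_Icc]; omega
      rw [hfil] at h0
      have hsum : ∑ n ∈ Finset.Icc s j, ε * (μ * t n - β n / (V1 * (V1 + ε))) =
          ε * ((∑ n ∈ Finset.Icc s j, μ * t n)
            - (∑ n ∈ Finset.Icc s j, β n) / (V1 * (V1 + ε))) := by
        rw [← Finset.mul_sum, Finset.sum_sub_distrib, ← Finset.sum_div]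
      rw [hsum] at h0
      have h1 : (∑ n ∈ Finset.Icc s j, β n) / (V1 * (V1 + ε)) ≤
          ∑ n ∈ Finset.Icc s j, μ * t n := by
        have := (mul_nonneg_iff_of_pos_left hε).mp h0
        linarith
      rw [div_le_iff₀ (by positivity)] at h1
      exact le_of_le_of_eq h1 (mul_comm _ _)
    by_contra hcon
    push_neg at hcon
    set Sj := ∑ n ∈ Finset.Icc s j, (μ * t n) with hSjdef
    set Bj := ∑ n ∈ Finset.Icc s j, β n with hBjdef
    have hεpos : 0 < (Bj - V1 ^ 2 * Sj) / (2 * V1 * Sj) :=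
      div_pos (by linarith) (by positivity)
    have hk := key _ hεpos
    have hmul : V1 * ((Bj - V1 ^ 2 * Sj) / (2 * V1 * Sj)) * Sj = (Bj - V1 ^ 2 * Sj) / 2 := by
      field_simp
    nlinarith [hk, hmul]
  -- suffix conditions from hmin2
  have hsuffix : ∀ j, k + 1 ≤ j → j ≤ l →
      V2 ^ 2 * (∑ n ∈ Finset.Icc j l, (μ * t n)) ≤ ∑ n ∈ Finset.Icc j l, β n := by
    intro j hkj hjl
    have hnej : (Finset.Icc j l).Nonempty := Finset.nonempty_Icc.mpr hjl
    have hSj : 0 < ∑ n ∈ Finset.Icc j l, (μ * t n) :=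
      Finset.sum_pos (fun n _ => by have := htpos n; positivity) hnej
    have hBj : 0 < ∑ n ∈ Finset.Icc j l, β n := Finset.sum_pos (fun n _ => hβpos n) hnej
    have key : ∀ ε : ℝ, 0 < ε → ε < V2 →
        V2 * (V2 - ε) * (∑ n ∈ Finset.Icc j l, (μ * t n)) ≤ ∑ n ∈ Finset.Icc j l, β n := by
      intro ε hε hεV
      have hVε : 0 < V2 - ε := by linarith
      have hFpos : ∀ n ∈ Finset.Icc (k + 1) l, 0 < (if j ≤ n then V2 - ε else V2) := by
        intro n _; split_ifs <;> linarith
      have hFmono : ∀ n, k + 1 ≤ n → n < l →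
          (if j ≤ n + 1 then V2 - ε else V2) ≤ (if j ≤ n then V2 - ε else V2) := by
        intro n _ _
        split_ifs <;> first | exact le_rfl | linarith | omega
      have h := hmin2 (fun n => if j ≤ n then V2 - ε else V2) hFpos hFmono
      have h0 : 0 ≤ ∑ n ∈ Finset.Icc (k + 1) l,
          ((β n / (if j ≤ n then V2 - ε else V2) + μ * t n * (if j ≤ n then V2 - ε else V2))
            - (β n / V2 + μ * t n * V2)) := by
        rw [Finset.sum_sub_distrib]; linarith
      have hdiff : ∀ n ∈ Finset.Icc (k + 1) l,
          ((β n / (if j ≤ n then V2 - ε else V2) + μ * t n * (if j ≤ n then V2 - ε else V2))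
            - (β n / V2 + μ * t n * V2)) =
          if j ≤ n then ε * (β n / (V2 * (V2 - ε)) - μ * t n) else 0 := by
        intro n _
        by_cases h' : j ≤ n
        · simp only [h', if_true]
          field_simp
          ring
        · simp [h']
      rw [Finset.sum_congr rfl hdiff, ← Finset.sum_filter] at h0
      have hfil : (Finset.Icc (k + 1) l).filter (fun n => j ≤ n) = Finset.Icc j l := by
        ext n; simp only [Finset.mem_filter, Finset.mem_Icc]; omega
      rw [hfil] at h0
      have hsum : ∑ n ∈ Finset.Icc j l, ε * (β n / (V2 * (V2 - ε)) - μ * t n) =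
          ε * ((∑ n ∈ Finset.Icc j l, β n) / (V2 * (V2 - ε))
            - (∑ n ∈ Finset.Icc j l, μ * t n)) := by
        rw [← Finset.mul_sum, Finset.sum_sub_distrib, ← Finset.sum_div]
      rw [hsum] at h0
      have h1 : (∑ n ∈ Finset.Icc j l, μ * t n) ≤
          (∑ n ∈ Finset.Icc j l, β n) / (V2 * (V2 - ε)) := by
        have := (mul_nonneg_iff_of_pos_left hε).mp h0
        linarith
      rw [le_div_iff₀ (by positivity)] at h1
      exact le_of_eq_of_le (mul_comm _ _) h1
    by_contra hcon
    push_neg at hcon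
    set Sj := ∑ n ∈ Finset.Icc j l, (μ * t n) with hSjdef
    set Bj := ∑ n ∈ Finset.Icc j l, β n with hBjdef
    set ε := min (V2 / 2) ((V2 ^ 2 * Sj - Bj) / (2 * V2 * Sj)) with hεdef
    have hε1 : 0 < ε :=
      lt_min (by positivity) (div_pos (by linarith) (by positivity))
    have hε2 : ε < V2 := lt_of_le_of_lt (min_le_left _ _) (by linarith)
    have hk := key ε hε1 hε2
    have hεle : ε ≤ (V2 ^ 2 * Sj - Bj) / (2 * V2 * Sj) := min_le_right _ _
    have hmul : ((V2 ^ 2 * Sj - Bj) / (2 * V2 * Sj)) * (V2 * Sj) = (V2 ^ 2 * Sj - Bj) / 2 := by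
      field_simp
    have hb : ε * (V2 * Sj) ≤ (V2 ^ 2 * Sj - Bj) / 2 := by
      have := mul_le_mul_of_nonneg_right hεle (by positivity : (0:ℝ) ≤ V2 * Sj)
      linarith [hmul]
    nlinarith [hk, hb]
  -- Part 2 assembly
  intro F hFpos hFmono
  set c : ℕ → ℝ := fun n => μ * t n - β n / Vbar ^ 2 with hcdef
  have hVb2 : 0 < Vbar ^ 2 := by positivity
  have hc0 : ∑ n ∈ Finset.Icc s l, c n = 0 := by
    simp only [hcdef]
    rw [Finset.sum_sub_distrib, ← Finset.sum_div, ← Finset.mul_sum, hVbsq]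
    rw [← hBdef, ← hTdef]
    field_simp
    ring
  have hP : ∀ j, s ≤ j → j ≤ l → 0 ≤ ∑ n ∈ Finset.Icc s j, c n := by
    intro j hsj hjl
    by_cases hjk : j ≤ k
    · have hpre := hprefix j hsj hjk
      have hnej : (Finset.Icc s j).Nonempty := Finset.nonempty_Icc.mpr hsj
      have hBj : 0 < ∑ n ∈ Finset.Icc s j, β n := Finset.sum_pos (fun n _ => hβpos n) hnej
      have hSj : 0 < ∑ n ∈ Finset.Icc s j, (μ * t n) :=
        Finset.sum_pos (fun n _ => by have := htpos n; positivity) hnej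
      have hV1sq_le : V1 ^ 2 ≤ Vbar ^ 2 := pow_le_pow_left₀ hV1pos.le hle1 2
      have e : ∑ n ∈ Finset.Icc s j, c n =
          (∑ n ∈ Finset.Icc s j, μ * t n) - (∑ n ∈ Finset.Icc s j, β n) / Vbar ^ 2 := by
        simp only [hcdef]
        rw [Finset.sum_sub_distrib, ← Finset.sum_div]
      rw [e]
      have h1 : (∑ n ∈ Finset.Icc s j, β n) / Vbar ^ 2 ≤
          (∑ n ∈ Finset.Icc s j, β n) / V1 ^ 2 :=
        div_le_div_of_nonneg_left hBj.le (by positivity) hV1sq_le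
      have h2 : (∑ n ∈ Finset.Icc s j, β n) / V1 ^ 2 ≤ ∑ n ∈ Finset.Icc s j, μ * t n := by
        rw [div_le_iff₀ (by positivity)]
        nlinarith [hpre]
      linarith
    · push_neg at hjk
      have hdisj2 : Disjoint (Finset.Icc s j) (Finset.Icc (j + 1) l) := by
        rw [Finset.disjoint_left]
        intro a ha hb
        simp only [Finset.mem_Icc] at ha hb
        omega
      have hsum2 : ∑ n ∈ Finset.Icc s j, c n + ∑ n ∈ Finset.Icc (j + 1) l, c n =
          ∑ n ∈ Finset.Icc s l, c n := by
        rw [← Finset.sum_union hdisj2]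
        congr 1
        ext n; simp only [Finset.mem_union, Finset.mem_Icc]; omega
      have hsuf : ∑ n ∈ Finset.Icc (j + 1) l, c n ≤ 0 := by
        by_cases hjl' : j + 1 ≤ l
        · have hs := hsuffix (j + 1) (by omega) hjl'
          have hnej : (Finset.Icc (j + 1) l).Nonempty := Finset.nonempty_Icc.mpr hjl'
          have hBj : 0 < ∑ n ∈ Finset.Icc (j + 1) l, β n :=
            Finset.sum_pos (fun n _ => hβpos n) hnej
          have hSj : 0 < ∑ n ∈ Finset.Icc (j + 1) l, (μ * t n) :=
            Finset.sum_pos (fun n _ => by have := htpos n; positivity) hnej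
          have hV2sq_ge : Vbar ^ 2 ≤ V2 ^ 2 := pow_le_pow_left₀ hVbpos.le hle2 2
          have e : ∑ n ∈ Finset.Icc (j + 1) l, c n =
              (∑ n ∈ Finset.Icc (j + 1) l, μ * t n)
                - (∑ n ∈ Finset.Icc (j + 1) l, β n) / Vbar ^ 2 := by
            simp only [hcdef]
            rw [Finset.sum_sub_distrib, ← Finset.sum_div]
          rw [e]
          have h1 : (∑ n ∈ Finset.Icc (j + 1) l, β n) / V2 ^ 2 ≤
              (∑ n ∈ Finset.Icc (j + 1) l, β n) / Vbar ^ 2 :=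
            div_le_div_of_nonneg_left hBj.le (by positivity) hV2sq_ge
          have h2 : (∑ n ∈ Finset.Icc (j + 1) l, μ * t n) ≤
              (∑ n ∈ Finset.Icc (j + 1) l, β n) / V2 ^ 2 := by
            rw [le_div_iff₀ (by positivity)]
            nlinarith [hs]
          linarith
        · have hemp : Finset.Icc (j + 1) l = ∅ := Finset.Icc_eq_empty (by omega)
          simp [hemp]
      linarith [hc0, hsum2, hsuf]
  have habel : 0 ≤ ∑ n ∈ Finset.Icc s l, c n * F n :=
    abel_nonneg c s l hskl hP F hFmono
      (fun n hsn hnl => (hFpos n (Finset.mem_Icc.mpr ⟨hsn, hnl⟩)).le)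
  have hconv : ∀ n ∈ Finset.Icc s l,
      β n / Vbar + μ * t n * Vbar + c n * (F n - Vbar) ≤ β n / F n + μ * t n * F n := by
    intro n hn
    have hFn := hFpos n hn
    have hβn := hβpos n
    have hkey : β n / F n - β n / Vbar + (β n / Vbar ^ 2) * (F n - Vbar) =
        β n * (F n - Vbar) ^ 2 / (F n * Vbar ^ 2) := by
      field_simp
      ring
    have hnn : 0 ≤ β n * (F n - Vbar) ^ 2 / (F n * Vbar ^ 2) := by positivity
    simp only [hcdef]
    nlinarith [hkey, hnn]
  have hsum_ineq := Finset.sum_le_sum hconv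
  have hfinal : ∑ n ∈ Finset.Icc s l, (β n / Vbar + μ * t n * Vbar + c n * (F n - Vbar)) =
      (∑ n ∈ Finset.Icc s l, (β n / Vbar + μ * t n * Vbar))
        + ∑ n ∈ Finset.Icc s l, c n * F n := by
    rw [Finset.sum_add_distrib]
    congr 1
    have e1 : ∑ n ∈ Finset.Icc s l, c n * (F n - Vbar) =
        (∑ n ∈ Finset.Icc s l, c n * F n) - (∑ n ∈ Finset.Icc s l, c n) * Vbar := by
      rw [Finset.sum_mul, ← Finset.sum_sub_distrib]
      exact Finset.sum_congr rfl fun n _ => by ring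
    rw [e1, hc0]
    ring
  linarith [hsum_ineq, habel, hfinal]
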